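/- Let 1<p,q<∞ with 1/p+1/q=1, let μ be a finite Borel measure on ℝ^d, let {λ_n} be a sequence of Borel probability measures with sup{|t| : t ∈ supp λ_n} → 0 as n → ∞ (an approximate identity), and let ν be a σ-finite Borel measure such that every ν ∗ λ_n is a (p,q)-Bessel measure for μ with a uniform bound B. Then ν is a (p,q)-Bessel measure for μ with bound B. -/

import Mathlib

open MeasureTheory Complex Filter
open scoped ENNReal NNReal Real RealInnerProductSpace

/-- The Fourier transform of the measure `f dμ` at `t`:
`(f dμ)^(t) = ∫ f(x) e^{-2πi t·x} dμ(x)`. -/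
noncomputable def FT {d : ℕ} (μ : Measure (EuclideanSpace ℝ (Fin d)))
    (f : EuclideanSpace ℝ (Fin d) → ℂ) (t : EuclideanSpace ℝ (Fin d)) : ℂ :=
  ∫ x, f x * Complex.exp (-(2 * Real.pi * (⟪t, x⟫ : ℝ) : ℝ) * Complex.I) ∂μ
variable {d : ℕ}

/-- Convolution of two Borel measures on `ℝ^d`. -/
noncomputable def convM (ν ρ : Measure (EuclideanSpace ℝ (Fin d))) :
    Measure (EuclideanSpace ℝ (Fin d)) :=
  Measure.map (fun z : EuclideanSpace ℝ (Fin d) × EuclideanSpace ℝ (Fin d) => z.1 + z.2)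
    (ν.prod ρ)

set_option maxHeartbeats 1000000 in
/-- If `{Λ n}` is an approximate identity (probability measures whose supports shrink to
`{0}`), `ν` is σ-finite, and every `ν ∗ Λ n` is a `(p,q)`-Bessel measure for the finite
measure `μ` with the uniform bound `B`, then `ν` itself is a `(p,q)`-Bessel measure for
`μ` with bound `B`. -/
theorem stmt18 (p q : ℝ) (hp : 1 < p) (hq : 1 < q) (hpq : 1 / p + 1 / q = 1)
    (μ ν : Measure (EuclideanSpace ℝ (Fin d))) [IsFiniteMeasure μ] [SigmaFinite ν]
    (Λ : ℕ → Measure (EuclideanSpace ℝ (Fin d))) (hprob : ∀ n, IsProbabilityMeasure (Λ n))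
    (happrox : ∀ ε : ℝ, 0 < ε → ∃ N : ℕ, ∀ n ≥ N,
      (Λ n) {t : EuclideanSpace ℝ (Fin d) | ε < ‖t‖} = 0)
    (B : ℝ) (hB : 0 < B)
    (hBessel : ∀ n, ∀ f : EuclideanSpace ℝ (Fin d) → ℂ, MemLp f (ENNReal.ofReal p) μ →
      ∫⁻ t, (‖FT μ f t‖₊ : ℝ≥0∞) ^ q ∂(convM ν (Λ n)) ≤
        ENNReal.ofReal B * (eLpNorm f (ENNReal.ofReal p) μ) ^ q) :
    ∀ f : EuclideanSpace ℝ (Fin d) → ℂ, MemLp f (ENNReal.ofReal p) μ →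
      ∫⁻ t, (‖FT μ f t‖₊ : ℝ≥0∞) ^ q ∂ν ≤
        ENNReal.ofReal B * (eLpNorm f (ENNReal.ofReal p) μ) ^ q := by
  intro f hf
  have hp1 : (1:ℝ≥0∞) ≤ ENNReal.ofReal p := by
    rw [show (1:ℝ≥0∞) = ENNReal.ofReal 1 by simp]
    exact ENNReal.ofReal_le_ofReal hp.le
  have hfi : Integrable f μ := hf.integrable hp1
  have hcont : Continuous (FT μ f) := by
    apply continuous_of_dominated (bound := fun x => ‖f x‖)
    · intro t
      have h1 : Continuous fun x : EuclideanSpace ℝ (Fin d) => (⟪t, x⟫ : ℝ) :=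
        Continuous.inner continuous_const continuous_id
      have h2 : Continuous fun x : EuclideanSpace ℝ (Fin d) =>
          Complex.exp (-(2 * Real.pi * (⟪t, x⟫ : ℝ) : ℝ) * Complex.I) := by fun_prop
      exact hf.aestronglyMeasurable.mul h2.aestronglyMeasurable
    · intro t
      filter_upwards with x
      rw [norm_mul]
      rw [show ((-(2 * Real.pi * (⟪t, x⟫ : ℝ) : ℝ) : ℂ)) = ((-(2 * Real.pi * (⟪t, x⟫ : ℝ)) : ℝ) : ℂ) by push_cast; ring]
      rw [Complex.norm_exp_ofReal_mul_I, mul_one]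
    · exact hfi.norm
    · filter_upwards with x
      have h1 : Continuous fun t : EuclideanSpace ℝ (Fin d) => (⟪t, x⟫ : ℝ) :=
        Continuous.inner continuous_id continuous_const
      fun_prop
  set G : EuclideanSpace ℝ (Fin d) → ℝ≥0∞ := fun t => (‖FT μ f t‖₊ : ℝ≥0∞) ^ q with hGdef
  have hGcont : Continuous G :=
    ENNReal.continuous_rpow_const.comp (ENNReal.continuous_coe.comp hcont.nnnorm)
  have key : ∀ x, G x ≤ Filter.liminf (fun n => ∫⁻ t, G (x + t) ∂(Λ n)) Filter.atTop := by
    intro x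
    refine le_of_forall_lt fun c hc => ?_
    obtain ⟨c', hcc', hc'⟩ := exists_between hc
    have hU : IsOpen {y | c' < G y} := isOpen_lt continuous_const hGcont
    obtain ⟨δ, hδ, hball⟩ := Metric.isOpen_iff.1 hU x hc'
    obtain ⟨N, hN⟩ := happrox (δ/2) (by linarith)
    have hev : ∀ᶠ n in atTop, c' ≤ ∫⁻ t, G (x + t) ∂(Λ n) := by
      filter_upwards [eventually_ge_atTop N] with n hn
      have := hprob n
      have hae : ∀ᵐ t ∂(Λ n), c' ≤ G (x + t) := by
        rw [ae_iff]
        refine measure_mono_null ?_ (hN n hn)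
        intro t ht
        simp only [Set.mem_setOf_eq, not_le] at ht ⊢
        by_contra h
        push_neg at h
        have hmem : x + t ∈ Metric.ball x δ := by
          rw [Metric.mem_ball, dist_eq_norm]
          simpa using lt_of_le_of_lt h (by linarith)
        exact absurd (hball hmem) (not_lt.2 ht.le)
      calc c' = ∫⁻ _, c' ∂(Λ n) := by simp
        _ ≤ _ := lintegral_mono_ae hae
    exact lt_of_lt_of_le hcc' (le_liminf_of_le (by isBoundedDefault) hev)
  have hGm2 : Measurable fun z : EuclideanSpace ℝ (Fin d) × EuclideanSpace ℝ (Fin d) =>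
      G (z.1 + z.2) := by
    have := hGcont.measurable
    fun_prop
  have hmeas_inner : ∀ n, Measurable fun x => ∫⁻ t, G (x + t) ∂(Λ n) := by
    intro n
    have := hprob n
    exact Measurable.lintegral_prod_right hGm2
  have hconv : ∀ n, ∫⁻ x, ∫⁻ t, G (x + t) ∂(Λ n) ∂ν = ∫⁻ t, G t ∂(convM ν (Λ n)) := by
    intro n
    have := hprob n
    rw [convM, lintegral_map (g := fun z : EuclideanSpace ℝ (Fin d) × EuclideanSpace ℝ (Fin d) =>
        z.1 + z.2) hGcont.measurable (measurable_fst.add measurable_snd),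
      lintegral_prod (fun z => G (z.1 + z.2)) hGm2.aemeasurable]
  calc ∫⁻ t, G t ∂ν ≤ ∫⁻ x, liminf (fun n => ∫⁻ t, G (x + t) ∂(Λ n)) atTop ∂ν :=
        lintegral_mono key
    _ ≤ liminf (fun n => ∫⁻ x, ∫⁻ t, G (x + t) ∂(Λ n) ∂ν) atTop :=
        lintegral_liminf_le hmeas_inner
    _ ≤ liminf (fun _ : ℕ => ENNReal.ofReal B * (eLpNorm f (ENNReal.ofReal p) μ) ^ q) atTop := by
        refine liminf_le_liminf ?_
        filter_upwards with n
        rw [hconv n]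
        exact hBessel n f hf
    _ = _ := liminf_const _
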